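/- Let θ : ℂ → ℂ be continuously differentiable in the real sense with ‖Dθ(ξ)‖ ≤ K for all ξ ∈ ℂ, and let C* > 0. Then W is Gateaux differentiable as a map from H to H with derivative W′: for all w, z : ℤ³\{0} → ℂ³ with Σ_{j≠0}|w_j|² < ∞ and Σ_{j≠0}|z_j|² < ∞, one has lim_{ε→0} Σ_{j≠0} |ε⁻¹(W(w+εz)_j − W(w)_j) − (W′(w)z)_j|² = 0. -/

import Mathlib

noncomputable section

/-- Squared Euclidean norm `|j|²` on `ℤ³`. -/
def znormSq (j : Fin 3 → ℤ) : ℝ := ∑ i, ((j i : ℝ))^2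

/-- Euclidean norm `|j|` on `ℤ³`. -/
def znorm (j : Fin 3 → ℤ) : ℝ := Real.sqrt (znormSq j)

/-- Squared Euclidean norm `|x|² = Σ_k |x^k|²` of a vector `x ∈ ℂ³`. -/
def vnormSq (x : Fin 3 → ℂ) : ℝ := ∑ i, ‖x i‖ ^ 2

/-- The Leray projector matrix `P_j = Id − |j|⁻² j jᵀ` acting on `ℂ³`. -/
def leray (j : Fin 3 → ℤ) (x : Fin 3 → ℂ) : Fin 3 → ℂ :=
  fun i => x i - ((∑ k, (j k : ℂ) * x k) / ((znormSq j : ℝ) : ℂ)) * (j i : ℂ)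

/-- The truncation map `W`, defined coefficientwise by
`W(w)_j = (C*/|j|³) P_j θ⃗(|j|³ w_j / C*)`. -/
def Wmap (θ : ℂ → ℂ) (Cs : ℝ) (w : (Fin 3 → ℤ) → (Fin 3 → ℂ)) (j : Fin 3 → ℤ) :
    Fin 3 → ℂ :=
  fun i => ((Cs / (znorm j) ^ 3 : ℝ) : ℂ) *
    leray j (fun k => θ ((((znorm j) ^ 3 / Cs : ℝ) : ℂ) * w j k)) i

/-- The derivative of the truncation map,
`(W′(w)z)_j = P_j Dθ⃗(|j|³ w_j / C*)[z_j]`. -/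
def Wderiv (θ : ℂ → ℂ) (Cs : ℝ) (w z : (Fin 3 → ℤ) → (Fin 3 → ℂ)) (j : Fin 3 → ℤ) :
    Fin 3 → ℂ :=
  leray j (fun k => fderiv ℝ θ ((((znorm j) ^ 3 / Cs : ℝ) : ℂ) * w j k) (z j k))

open Topology

/-! ### Auxiliary lemmas -/

lemma znormSq_nonneg (j : Fin 3 → ℤ) : 0 ≤ znormSq j :=
  Finset.sum_nonneg fun _ _ => sq_nonneg _

lemma znormSq_pos {j : Fin 3 → ℤ} (hj : j ≠ 0) : 0 < znormSq j := by
  rcases (znormSq_nonneg j).lt_or_eq with h | h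
  · exact h
  · exfalso
    apply hj
    funext i
    have := (Finset.sum_eq_zero_iff_of_nonneg (fun i _ => sq_nonneg ((j i : ℝ)))).mp h.symm i
      (Finset.mem_univ i)
    have : (j i : ℝ) = 0 := by
      have := sq_eq_zero_iff.mp this
      exact this
    exact_mod_cast this

lemma znorm_pos {j : Fin 3 → ℤ} (hj : j ≠ 0) : 0 < znorm j :=
  Real.sqrt_pos.mpr (znormSq_pos hj)

lemma vnormSq_nonneg (x : Fin 3 → ℂ) : 0 ≤ vnormSq x :=
  Finset.sum_nonneg fun _ _ => sq_nonneg _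

lemma leray_lin (j : Fin 3 → ℤ) (a : ℂ) (x y u : Fin 3 → ℂ) (i : Fin 3) :
    a * leray j x i - a * leray j y i - leray j u i
      = leray j (fun k => a * x k - a * y k - u k) i := by
  have hs : ∑ k, (j k : ℂ) * (a * x k - a * y k - u k)
      = a * (∑ k, (j k : ℂ) * x k) - a * (∑ k, (j k : ℂ) * y k) - ∑ k, (j k : ℂ) * u k := by
    rw [Finset.mul_sum, Finset.mul_sum, ← Finset.sum_sub_distrib, ← Finset.sum_sub_distrib]
    exact Finset.sum_congr rfl fun _ _ => by ring
  simp only [leray, hs]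
  ring

lemma vnormSq_leray_le {j : Fin 3 → ℤ} (hj : j ≠ 0) (x : Fin 3 → ℂ) :
    vnormSq (leray j x) ≤ 4 * vnormSq x := by
  have hN : 0 < znormSq j := znormSq_pos hj
  set N := znormSq j with hNdef
  set S := ∑ k, (j k : ℂ) * x k with hSdef
  have hS : ‖S‖ ^ 2 ≤ N * vnormSq x := by
    have h1 : ‖S‖ ≤ ∑ k, |(j k : ℝ)| * ‖x k‖ := by
      refine (norm_sum_le _ _).trans_eq ?_
      refine Finset.sum_congr rfl fun k _ => ?_
      rw [norm_mul, Complex.norm_intCast]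
    calc ‖S‖ ^ 2 ≤ (∑ k, |(j k : ℝ)| * ‖x k‖) ^ 2 := by
          exact pow_le_pow_left₀ (norm_nonneg _) h1 2
      _ ≤ (∑ k, |(j k : ℝ)| ^ 2) * ∑ k, ‖x k‖ ^ 2 :=
          Finset.sum_mul_sq_le_sq_mul_sq _ _ _
      _ = N * vnormSq x := by
          simp [hNdef, znormSq, vnormSq, sq_abs]
  have key : ∀ i : Fin 3, ‖leray j x i‖ ^ 2
      ≤ 2 * ‖x i‖ ^ 2 + 2 * (‖S‖ / N) ^ 2 * ((j i : ℝ)) ^ 2 := by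
    intro i
    have h1 : ‖leray j x i‖
        ≤ ‖x i‖ + ‖S‖ / N * |(j i : ℝ)| := by
      simp only [leray]
      refine (norm_sub_le _ _).trans ?_
      gcongr
      rw [norm_mul, norm_div, Complex.norm_real, Real.norm_eq_abs, Complex.norm_intCast, abs_of_nonneg hN.le]
    calc ‖leray j x i‖ ^ 2
        ≤ (‖x i‖ + ‖S‖ / N * |(j i : ℝ)|) ^ 2 :=
          pow_le_pow_left₀ (norm_nonneg _) h1 2
      _ ≤ 2 * ‖x i‖ ^ 2 + 2 * (‖S‖ / N) ^ 2 * ((j i : ℝ)) ^ 2 := by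
          have := sq_nonneg (‖x i‖ - ‖S‖ / N * |(j i : ℝ)|)
          have h2 : (‖S‖ / N * |(j i : ℝ)|) ^ 2
              = (‖S‖ / N) ^ 2 * ((j i : ℝ)) ^ 2 := by
            rw [mul_pow, sq_abs]
          nlinarith
  have hsum : vnormSq (leray j x)
      ≤ 2 * vnormSq x + 2 * (‖S‖ / N) ^ 2 * N := by
    have := Finset.sum_le_sum (fun i (_ : i ∈ Finset.univ) => key i)
    simpa [vnormSq, Finset.sum_add_distrib, ← Finset.mul_sum, hNdef, znormSq] using this
  have hdiv : (‖S‖ / N) ^ 2 * N = ‖S‖ ^ 2 / N := by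
    field_simp
  have hle : ‖S‖ ^ 2 / N ≤ vnormSq x := by
    rw [div_le_iff₀ hN]
    linarith [hS]
  have h2 : 2 * (‖S‖ / N) ^ 2 * N = 2 * (‖S‖ ^ 2 / N) := by
    rw [mul_assoc, hdiv]
  linarith

/-- The vector to which `leray j` is applied in the difference quotient. -/
def uvec (θ : ℂ → ℂ) (Cs : ℝ) (w z : (Fin 3 → ℤ) → (Fin 3 → ℂ)) (ε : ℝ)
    (j : Fin 3 → ℤ) : Fin 3 → ℂ :=
  fun k => ((ε⁻¹ : ℝ) : ℂ) * ((Cs / (znorm j) ^ 3 : ℝ) : ℂ) *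
      θ ((((znorm j) ^ 3 / Cs : ℝ) : ℂ) * (w + ε • z) j k)
    - ((ε⁻¹ : ℝ) : ℂ) * ((Cs / (znorm j) ^ 3 : ℝ) : ℂ) *
      θ ((((znorm j) ^ 3 / Cs : ℝ) : ℂ) * w j k)
    - fderiv ℝ θ ((((znorm j) ^ 3 / Cs : ℝ) : ℂ) * w j k) (z j k)

lemma eq_leray (θ : ℂ → ℂ) (Cs : ℝ) (w z : (Fin 3 → ℤ) → (Fin 3 → ℂ)) (ε : ℝ)
    (j : Fin 3 → ℤ) (i : Fin 3) :
    ((ε⁻¹ : ℝ) : ℂ) * (Wmap θ Cs (w + ε • z) j i - Wmap θ Cs w j i) -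
        Wderiv θ Cs w z j i
      = leray j (uvec θ Cs w z ε j) i := by
  have h := leray_lin j (((ε⁻¹ : ℝ) : ℂ) * ((Cs / (znorm j) ^ 3 : ℝ) : ℂ))
    (fun k => θ ((((znorm j) ^ 3 / Cs : ℝ) : ℂ) * (w + ε • z) j k))
    (fun k => θ ((((znorm j) ^ 3 / Cs : ℝ) : ℂ) * w j k))
    (fun k => fderiv ℝ θ ((((znorm j) ^ 3 / Cs : ℝ) : ℂ) * w j k) (z j k)) i
  have h2 : leray j (uvec θ Cs w z ε j) i
      = leray j (fun k => ((ε⁻¹ : ℝ) : ℂ) * ((Cs / (znorm j) ^ 3 : ℝ) : ℂ) *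
          θ ((((znorm j) ^ 3 / Cs : ℝ) : ℂ) * (w + ε • z) j k)
        - ((ε⁻¹ : ℝ) : ℂ) * ((Cs / (znorm j) ^ 3 : ℝ) : ℂ) *
          θ ((((znorm j) ^ 3 / Cs : ℝ) : ℂ) * w j k)
        - fderiv ℝ θ ((((znorm j) ^ 3 / Cs : ℝ) : ℂ) * w j k) (z j k)) i := rfl
  simp only [Wmap, Wderiv]
  rw [h2, ← h]
  ring

lemma uvec_tendsto (θ : ℂ → ℂ) (hsmooth : ContDiff ℝ 1 θ) (Cs : ℝ) (hCs : 0 < Cs)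
    (w z : (Fin 3 → ℤ) → (Fin 3 → ℂ)) {j : Fin 3 → ℤ} (hj : j ≠ 0) (k : Fin 3) :
    Filter.Tendsto (fun ε : ℝ => uvec θ Cs w z ε j k) (𝓝[≠] (0:ℝ)) (𝓝 0) := by
  have hn : 0 < znorm j := znorm_pos hj
  have hd : DifferentiableAt ℝ θ ((((znorm j) ^ 3 / Cs : ℝ) : ℂ) * w j k) :=
    (hsmooth.differentiable one_ne_zero).differentiableAt
  set q : ℂ := (((znorm j) ^ 3 / Cs : ℝ) : ℂ) * w j k with hq
  set c : ℂ := (((znorm j) ^ 3 / Cs : ℝ) : ℂ) * z j k with hc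
  have hφ : HasDerivAt (fun ε : ℝ => q + ε • c) c 0 := by
    simpa using ((hasDerivAt_id (0:ℝ)).smul_const c).const_add q
  have hθd : HasDerivAt (fun ε : ℝ => θ (q + ε • c)) (fderiv ℝ θ q c) 0 := by
    have h1 : HasFDerivAt θ (fderiv ℝ θ q) ((fun ε : ℝ => q + ε • c) 0) := by
      simpa using hd.hasFDerivAt
    exact h1.comp_hasDerivAt 0 hφ
  have hslope := hasDerivAt_iff_tendsto_slope.mp hθd
  have hmain : Filter.Tendsto
      (fun ε : ℝ => ((Cs / (znorm j) ^ 3 : ℝ) : ℂ) * slope (fun t : ℝ => θ (q + t • c)) 0 ε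
        - fderiv ℝ θ q (z j k)) (𝓝[≠] (0:ℝ))
      (𝓝 (((Cs / (znorm j) ^ 3 : ℝ) : ℂ) * fderiv ℝ θ q c - fderiv ℝ θ q (z j k))) :=
    (hslope.const_mul _).sub_const _
  have hCA : ((Cs / (znorm j) ^ 3 : ℝ) : ℂ) * (((znorm j) ^ 3 / Cs : ℝ) : ℂ) = 1 := by
    rw [← Complex.ofReal_mul]
    have : (Cs / (znorm j) ^ 3) * ((znorm j) ^ 3 / Cs) = 1 := by
      field_simp
    rw [this, Complex.ofReal_one]
  have hlim0 : ((Cs / (znorm j) ^ 3 : ℝ) : ℂ) * fderiv ℝ θ q c - fderiv ℝ θ q (z j k) = 0 := by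
    have hc' : c = ((znorm j) ^ 3 / Cs : ℝ) • z j k := by
      rw [hc, Complex.real_smul]
    rw [hc', (fderiv ℝ θ q).map_smul, Complex.real_smul, ← mul_assoc, hCA, one_mul, sub_self]
  rw [hlim0] at hmain
  apply hmain.congr
  intro ε
  have harg : (((znorm j) ^ 3 / Cs : ℝ) : ℂ) * (w + ε • z) j k = q + ε • c := by
    simp only [Pi.add_apply, Pi.smul_apply, hq, hc, mul_add, mul_smul_comm]
  simp only [uvec, harg, slope, sub_zero, vsub_eq_sub, zero_smul, add_zero, smul_sub,
    Complex.real_smul]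
  ring

lemma uvec_bound (θ : ℂ → ℂ) (K : ℝ) (hsmooth : ContDiff ℝ 1 θ)
    (hbd : ∀ ξ : ℂ, ‖fderiv ℝ θ ξ‖ ≤ K) (Cs : ℝ) (hCs : 0 < Cs)
    (w z : (Fin 3 → ℤ) → (Fin 3 → ℂ)) {j : Fin 3 → ℤ} (hj : j ≠ 0) (k : Fin 3)
    {ε : ℝ} (hε : ε ≠ 0) :
    ‖uvec θ Cs w z ε j k‖ ≤ 2 * K * ‖z j k‖ := by
  have hn : 0 < znorm j := znorm_pos hj
  have hK : 0 ≤ K := le_trans (norm_nonneg _) (hbd 0)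
  have hlip : ∀ X Y : ℂ, ‖θ X - θ Y‖ ≤ K * ‖X - Y‖ := fun X Y =>
    convex_univ.norm_image_sub_le_of_norm_fderiv_le
      (fun x _ => (hsmooth.differentiable one_ne_zero).differentiableAt)
      (fun x _ => hbd x) (Set.mem_univ Y) (Set.mem_univ X)
  set X : ℂ := (((znorm j) ^ 3 / Cs : ℝ) : ℂ) * (w + ε • z) j k with hX
  set Y : ℂ := (((znorm j) ^ 3 / Cs : ℝ) : ℂ) * w j k with hY
  have hXY : ‖X - Y‖ = ((znorm j) ^ 3 / Cs) * (|ε| * ‖z j k‖) := by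
    have : X - Y = (((znorm j) ^ 3 / Cs : ℝ) : ℂ) * ((ε : ℝ) • z j k) := by
      simp only [hX, hY, Pi.add_apply, Pi.smul_apply, mul_add, add_sub_cancel_left]
    rw [this, norm_mul, Complex.norm_real, Real.norm_eq_abs, abs_of_pos (by positivity)]
    rw [Complex.real_smul, norm_mul, Complex.norm_real, Real.norm_eq_abs]
  have huv : uvec θ Cs w z ε j k
      = ((ε⁻¹ : ℝ) : ℂ) * ((Cs / (znorm j) ^ 3 : ℝ) : ℂ) * (θ X - θ Y)
        - fderiv ℝ θ Y (z j k) := by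
    simp only [uvec, hX, hY]
    ring
  rw [huv]
  calc ‖((ε⁻¹ : ℝ) : ℂ) * ((Cs / (znorm j) ^ 3 : ℝ) : ℂ) * (θ X - θ Y)
        - fderiv ℝ θ Y (z j k)‖
      ≤ ‖((ε⁻¹ : ℝ) : ℂ) * ((Cs / (znorm j) ^ 3 : ℝ) : ℂ) * (θ X - θ Y)‖
        + ‖fderiv ℝ θ Y (z j k)‖ := norm_sub_le _ _
    _ ≤ K * ‖z j k‖ + K * ‖z j k‖ := by
        gcongr ?_ + ?_
        · rw [norm_mul, norm_mul, Complex.norm_real, Real.norm_eq_abs, Complex.norm_real, Real.norm_eq_abs,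
            abs_of_pos (by positivity : (0:ℝ) < Cs / (znorm j)^3)]
          calc |ε⁻¹| * (Cs / (znorm j) ^ 3) * ‖θ X - θ Y‖
              ≤ |ε⁻¹| * (Cs / (znorm j) ^ 3) * (K * ‖X - Y‖) := by
                gcongr
                exact hlip X Y
            _ = K * ‖z j k‖ := by
                rw [hXY, abs_inv]
                field_simp
        · calc ‖fderiv ℝ θ Y (z j k)‖
              ≤ ‖fderiv ℝ θ Y‖ * ‖z j k‖ := (fderiv ℝ θ Y).le_opNorm _
            _ ≤ K * ‖z j k‖ := by
                gcongr
                exact hbd Y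
    _ = 2 * K * ‖z j k‖ := by ring


/-- Gateaux differentiability of the truncation map `W : H → H` with derivative `W′`:
if `θ` is `C¹` in the real sense with `‖Dθ(ξ)‖ ≤ K` everywhere, then for all square
summable families `w, z` one has
`lim_{ε→0} Σ_{j≠0} |ε⁻¹ (W(w+εz)_j − W(w)_j) − (W′(w)z)_j|² = 0`. -/
theorem Wmap_gateaux_differentiable (θ : ℂ → ℂ) (K : ℝ) (hsmooth : ContDiff ℝ 1 θ)
    (hbd : ∀ ξ : ℂ, ‖fderiv ℝ θ ξ‖ ≤ K) (Cs : ℝ) (hCs : 0 < Cs)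
    (w z : (Fin 3 → ℤ) → (Fin 3 → ℂ))
    (hw : Summable (fun j : {j : Fin 3 → ℤ // j ≠ 0} => vnormSq (w j.1)))
    (hz : Summable (fun j : {j : Fin 3 → ℤ // j ≠ 0} => vnormSq (z j.1))) :
    Filter.Tendsto
      (fun ε : ℝ => ∑' j : {j : Fin 3 → ℤ // j ≠ 0},
        vnormSq (fun i =>
          ((ε⁻¹ : ℝ) : ℂ) * (Wmap θ Cs (w + ε • z) j.1 i - Wmap θ Cs w j.1 i) -
            Wderiv θ Cs w z j.1 i))
      (𝓝[≠] (0 : ℝ)) (𝓝 0) := by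
  have hK : 0 ≤ K := le_trans (norm_nonneg _) (hbd 0)
  have heq : ∀ (ε : ℝ) (j : {j : Fin 3 → ℤ // j ≠ 0}),
      vnormSq (fun i =>
        ((ε⁻¹ : ℝ) : ℂ) * (Wmap θ Cs (w + ε • z) j.1 i - Wmap θ Cs w j.1 i) -
          Wderiv θ Cs w z j.1 i)
      = vnormSq (leray j.1 (uvec θ Cs w z ε j.1)) := fun ε j =>
    congrArg vnormSq (funext fun i => eq_leray θ Cs w z ε j.1 i)
  simp only [heq]
  have hpt : ∀ j : {j : Fin 3 → ℤ // j ≠ 0},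
      Filter.Tendsto (fun ε : ℝ => vnormSq (leray j.1 (uvec θ Cs w z ε j.1)))
        (𝓝[≠] (0:ℝ)) (𝓝 0) := by
    intro j
    have hu : ∀ k : Fin 3, Filter.Tendsto (fun ε : ℝ => uvec θ Cs w z ε j.1 k)
        (𝓝[≠] (0:ℝ)) (𝓝 0) := fun k => uvec_tendsto θ hsmooth Cs hCs w z j.2 k
    have hsumu : Filter.Tendsto (fun ε : ℝ => ∑ k, (j.1 k : ℂ) * uvec θ Cs w z ε j.1 k)
        (𝓝[≠] (0:ℝ)) (𝓝 0) := by
      have := tendsto_finset_sum (Finset.univ : Finset (Fin 3))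
        (fun k _ => (hu k).const_mul ((j.1 k : ℂ)))
      simpa using this
    have hli : ∀ i : Fin 3, Filter.Tendsto (fun ε : ℝ => leray j.1 (uvec θ Cs w z ε j.1) i)
        (𝓝[≠] (0:ℝ)) (𝓝 0) := by
      intro i
      have h2 : Filter.Tendsto
          (fun ε : ℝ => ((∑ k, (j.1 k : ℂ) * uvec θ Cs w z ε j.1 k) /
            ((znormSq j.1 : ℝ) : ℂ)) * (j.1 i : ℂ)) (𝓝[≠] (0:ℝ)) (𝓝 0) := by
        have := (hsumu.div_const (((znormSq j.1 : ℝ) : ℂ))).mul_const ((j.1 i : ℂ))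
        simpa using this
      have := (hu i).sub h2
      simpa [leray] using this
    have : Filter.Tendsto (fun ε : ℝ => ∑ i, ‖leray j.1 (uvec θ Cs w z ε j.1) i‖ ^ 2)
        (𝓝[≠] (0:ℝ)) (𝓝 0) := by
      have := tendsto_finset_sum (Finset.univ : Finset (Fin 3))
        (fun i _ => ((hli i).norm.pow 2))
      simpa using this
    simpa [vnormSq] using this
  have hbnd : ∀ᶠ ε : ℝ in 𝓝[≠] (0:ℝ), ∀ j : {j : Fin 3 → ℤ // j ≠ 0},
      ‖vnormSq (leray j.1 (uvec θ Cs w z ε j.1))‖ ≤ 16 * K ^ 2 * vnormSq (z j.1) := by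
    filter_upwards [self_mem_nhdsWithin] with ε hε
    intro j
    have hε' : ε ≠ 0 := hε
    have h1 : vnormSq (leray j.1 (uvec θ Cs w z ε j.1)) ≤ 4 * vnormSq (uvec θ Cs w z ε j.1) :=
      vnormSq_leray_le j.2 _
    have h2 : vnormSq (uvec θ Cs w z ε j.1) ≤ 4 * K ^ 2 * vnormSq (z j.1) := by
      have : ∀ k : Fin 3, ‖uvec θ Cs w z ε j.1 k‖ ^ 2
          ≤ 4 * K ^ 2 * ‖z j.1 k‖ ^ 2 := by
        intro k
        have hb := uvec_bound θ K hsmooth hbd Cs hCs w z j.2 k hε'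
        calc ‖uvec θ Cs w z ε j.1 k‖ ^ 2
            ≤ (2 * K * ‖z j.1 k‖) ^ 2 :=
              pow_le_pow_left₀ (norm_nonneg _) hb 2
          _ = 4 * K ^ 2 * ‖z j.1 k‖ ^ 2 := by ring
      have := Finset.sum_le_sum (fun k (_ : k ∈ Finset.univ) => this k)
      simpa [vnormSq, ← Finset.mul_sum] using this
    rw [Real.norm_of_nonneg (vnormSq_nonneg _)]
    nlinarith [vnormSq_nonneg (uvec θ Cs w z ε j.1), vnormSq_nonneg (z j.1)]
  have key := tendsto_tsum_of_dominated_convergence (𝓕 := 𝓝[≠] (0:ℝ))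
    (f := fun (ε : ℝ) (j : {j : Fin 3 → ℤ // j ≠ 0}) =>
      vnormSq (leray j.1 (uvec θ Cs w z ε j.1)))
    (g := fun _ => (0:ℝ)) (bound := fun j : {j : Fin 3 → ℤ // j ≠ 0} =>
      16 * K ^ 2 * vnormSq (z j.1)) (hz.mul_left _) hpt hbnd
  simpa using key

end
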